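/- In the deterministic Linear Threshold gadget: vertices {v†} ∪ {S₁,…,S_m} ∪ {T₁,…,T_m} ∪ {s_{j,i} : 1 ≤ j ≤ m, 1 ≤ i ≤ l} ∪ U, with edges (Sⱼ, s_{j,i}) and (s_{j,i}, Tⱼ) for all i, and (Tⱼ, uᵢ) for uᵢ ∈ Sⱼ; thresholds t_{Tⱼ} = l and t_v = 1 for all other vertices. For any A ⊆ {(v†,S₁),…,(v†,S_m)}, running the Linear Threshold cascade from seed {v†} in the graph with edge set E ∪ A activates exactly the vertices Sⱼ, s_{j,1},…,s_{j,l}, Tⱼ for those j with (v†,Sⱼ) ∈ A, together with ⋃_{(v†,Sⱼ)∈A} Sⱼ ⊆ U. In particular all of U is activated iff {Sⱼ : (v†,Sⱼ) ∈ A} is a set cover of U. -/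
import Mathlib


namespace LTGadget

/-- Vertices of the Linear-Threshold gadget:
`v†`, the `Sⱼ`'s, the `Tⱼ`'s, the `s_{j,i}`'s and the universe elements `uᵢ`. -/
abbrev V (m l : ℕ) := Unit ⊕ Fin m ⊕ Fin m ⊕ (Fin m × Fin l) ⊕ Fin l

def src {m l : ℕ} : V m l := Sum.inl ()
def Sn {m l : ℕ} (j : Fin m) : V m l := Sum.inr (Sum.inl j)
def Tn {m l : ℕ} (j : Fin m) : V m l := Sum.inr (Sum.inr (Sum.inl j))
def sn {m l : ℕ} (j : Fin m) (i : Fin l) : V m l :=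
  Sum.inr (Sum.inr (Sum.inr (Sum.inl (j, i))))
def un {m l : ℕ} (i : Fin l) : V m l := Sum.inr (Sum.inr (Sum.inr (Sum.inr i)))

/-- In-neighbourhoods of the gadget, with the edges `(v†,Sⱼ)`, `j ∈ A`, added:
`Sⱼ` has in-neighbour `v†` iff `j ∈ A`; `s_{j,i}` has in-neighbour `Sⱼ`;
`Tⱼ` has in-neighbours `s_{j,1},…,s_{j,l}`; `uᵢ` has in-neighbours
`{Tⱼ : uᵢ ∈ Sⱼ}`. -/
def pred {m l : ℕ} (S : Fin m → Finset (Fin l)) (A : Finset (Fin m)) :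
    V m l → Finset (V m l)
  | Sum.inl _ => ∅
  | Sum.inr (Sum.inl j) => if j ∈ A then {src} else ∅
  | Sum.inr (Sum.inr (Sum.inl j)) => Finset.univ.image (fun i => sn j i)
  | Sum.inr (Sum.inr (Sum.inr (Sum.inl (j, _)))) => {Sn j}
  | Sum.inr (Sum.inr (Sum.inr (Sum.inr i))) =>
      (Finset.univ.filter (fun j => i ∈ S j)).image Tn

/-- Thresholds: `t_{Tⱼ} = l`, and `t_v = 1` for every other vertex. -/
def thr {m l : ℕ} : V m l → ℕ
  | Sum.inr (Sum.inr (Sum.inl _)) => l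
  | _ => 1

/-- One round of the deterministic Linear-Threshold cascade: a vertex becomes
active when at least `t_v` of its in-neighbours are active. -/
def step {m l : ℕ} (S : Fin m → Finset (Fin l)) (A : Finset (Fin m))
    (I : Finset (V m l)) : Finset (V m l) :=
  I ∪ Finset.univ.filter (fun v => thr v ≤ ((pred S A v) ∩ I).card)

/-- The fixed point of the cascade from seed `{v†}`. -/
def final {m l : ℕ} (S : Fin m → Finset (Fin l)) (A : Finset (Fin m)) :
    Finset (V m l) :=
  (step S A)^[Fintype.card (V m l)] {src}

section Aux
variable {m l : ℕ} (S : Fin m → Finset (Fin l)) (A : Finset (Fin m))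

lemma mem_step {I : Finset (V m l)} {v : V m l} :
    v ∈ step S A I ↔ v ∈ I ∨ thr v ≤ ((pred S A v) ∩ I).card := by
  simp [step]

lemma singleton_inter_nonempty {a : V m l} {I : Finset (V m l)} :
    (({a} : Finset (V m l)) ∩ I).Nonempty ↔ a ∈ I := by
  constructor
  · rintro ⟨x, hx⟩
    simp only [Finset.mem_inter, Finset.mem_singleton] at hx
    exact hx.1 ▸ hx.2
  · intro h; exact ⟨a, by simp [h]⟩

lemma one_le_card_inter {a : V m l} {I : Finset (V m l)} :
    1 ≤ (({a} : Finset (V m l)) ∩ I).card ↔ a ∈ I := by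
  rw [Finset.one_le_card]
  constructor
  · rintro ⟨x, hx⟩
    simp only [Finset.mem_inter, Finset.mem_singleton] at hx
    exact hx.1 ▸ hx.2
  · intro h; exact ⟨a, by simp [h]⟩

def I1 : Finset (V m l) := {src} ∪ A.image Sn
def I2 : Finset (V m l) :=
  I1 A ∪ (A ×ˢ (Finset.univ : Finset (Fin l))).image (fun p => sn p.1 p.2)
def I3 : Finset (V m l) := I2 A ∪ A.image Tn
def FF : Finset (V m l) :=
  I3 A ∪ (Finset.univ.filter (fun i => ∃ j ∈ A, i ∈ S j)).image un

@[simp] lemma mem_I1_src {u : Unit} : (Sum.inl u : V m l) ∈ I1 A := by cases u; simp [I1, src]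
@[simp] lemma mem_I1_Sn {j : Fin m} : (Sum.inr (Sum.inl j) : V m l) ∈ I1 A ↔ j ∈ A := by
  simp [I1, src, Sn]
@[simp] lemma mem_I1_Tn {j : Fin m} : (Sum.inr (Sum.inr (Sum.inl j)) : V m l) ∈ I1 A ↔ False := by
  simp [I1, src, Sn]
@[simp] lemma mem_I1_sn {j : Fin m} {i : Fin l} :
    (Sum.inr (Sum.inr (Sum.inr (Sum.inl (j, i)))) : V m l) ∈ I1 A ↔ False := by
  simp [I1, src, Sn]
@[simp] lemma mem_I1_un {i : Fin l} :
    (Sum.inr (Sum.inr (Sum.inr (Sum.inr i))) : V m l) ∈ I1 A ↔ False := by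
  simp [I1, src, Sn]

@[simp] lemma mem_I2_src {u : Unit} : (Sum.inl u : V m l) ∈ I2 A := by cases u; simp [I2]
@[simp] lemma mem_I2_Sn {j : Fin m} : (Sum.inr (Sum.inl j) : V m l) ∈ I2 A ↔ j ∈ A := by
  simp [I2, sn]
@[simp] lemma mem_I2_Tn {j : Fin m} : (Sum.inr (Sum.inr (Sum.inl j)) : V m l) ∈ I2 A ↔ False := by
  simp [I2, sn]
@[simp] lemma mem_I2_sn {j : Fin m} {i : Fin l} :
    (Sum.inr (Sum.inr (Sum.inr (Sum.inl (j, i)))) : V m l) ∈ I2 A ↔ j ∈ A := by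
  simp [I2, sn]
@[simp] lemma mem_I2_un {i : Fin l} :
    (Sum.inr (Sum.inr (Sum.inr (Sum.inr i))) : V m l) ∈ I2 A ↔ False := by
  simp [I2, sn]

@[simp] lemma mem_I3_src {u : Unit} : (Sum.inl u : V m l) ∈ I3 A := by cases u; simp [I3]
@[simp] lemma mem_I3_Sn {j : Fin m} : (Sum.inr (Sum.inl j) : V m l) ∈ I3 A ↔ j ∈ A := by
  simp [I3, Tn]
@[simp] lemma mem_I3_Tn {j : Fin m} : (Sum.inr (Sum.inr (Sum.inl j)) : V m l) ∈ I3 A ↔ j ∈ A := by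
  simp [I3, Tn]
@[simp] lemma mem_I3_sn {j : Fin m} {i : Fin l} :
    (Sum.inr (Sum.inr (Sum.inr (Sum.inl (j, i)))) : V m l) ∈ I3 A ↔ j ∈ A := by
  simp [I3, Tn]
@[simp] lemma mem_I3_un {i : Fin l} :
    (Sum.inr (Sum.inr (Sum.inr (Sum.inr i))) : V m l) ∈ I3 A ↔ False := by
  simp [I3, Tn]

@[simp] lemma mem_FF_src {u : Unit} : (Sum.inl u : V m l) ∈ FF S A := by cases u; simp [FF]
@[simp] lemma mem_FF_Sn {j : Fin m} : (Sum.inr (Sum.inl j) : V m l) ∈ FF S A ↔ j ∈ A := by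
  simp [FF, un]
@[simp] lemma mem_FF_Tn {j : Fin m} :
    (Sum.inr (Sum.inr (Sum.inl j)) : V m l) ∈ FF S A ↔ j ∈ A := by
  simp [FF, un]
@[simp] lemma mem_FF_sn {j : Fin m} {i : Fin l} :
    (Sum.inr (Sum.inr (Sum.inr (Sum.inl (j, i)))) : V m l) ∈ FF S A ↔ j ∈ A := by
  simp [FF, un]
@[simp] lemma mem_FF_un {i : Fin l} :
    (Sum.inr (Sum.inr (Sum.inr (Sum.inr i))) : V m l) ∈ FF S A ↔ ∃ j ∈ A, i ∈ S j := by
  simp [FF, un]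

lemma sn_inj (j : Fin m) : Function.Injective (fun i : Fin l => sn (m := m) (l := l) j i) := by
  intro a b h; simpa [sn] using h

lemma inter_sn_empty {I : Finset (V m l)} (j : Fin m)
    (h : ∀ i : Fin l,
      (Sum.inr (Sum.inr (Sum.inr (Sum.inl (j, i)))) : V m l) ∉ I) :
    (Finset.univ.image (fun i => sn j i) ∩ I) = ∅ := by
  rw [Finset.eq_empty_iff_forall_notMem]
  intro x hx
  simp only [Finset.mem_inter, Finset.mem_image] at hx
  obtain ⟨⟨i, -, rfl⟩, h2⟩ := hx
  exact h i h2

lemma inter_Tn_empty {I : Finset (V m l)} {P : Finset (Fin m)}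
    (h : ∀ (j : Fin m), (Sum.inr (Sum.inr (Sum.inl j)) : V m l) ∉ I) :
    (P.image Tn ∩ I) = ∅ := by
  rw [Finset.eq_empty_iff_forall_notMem]
  intro x hx
  simp only [Finset.mem_inter, Finset.mem_image] at hx
  obtain ⟨⟨j, -, rfl⟩, h2⟩ := hx
  exact h j h2

lemma step1 (hl : 1 ≤ l) : step S A {src} = I1 A := by
  have hl0 : ¬ (l ≤ 0) := by omega
  ext v
  rw [mem_step]
  rcases v with ⟨⟩ | j | j | ⟨j, i⟩ | i
  · simp [src, thr]
  · by_cases hj : j ∈ A <;>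
      simp [src, thr, pred, hj, singleton_inter_nonempty]
  · have hc := inter_sn_empty (I := ({Sum.inl ()} : Finset (V m l))) j (by simp)
    simp [src, thr, pred, hc, hl0]
  · have hc : (({Sn j} : Finset (V m l)) ∩ ({Sum.inl ()} : Finset (V m l))) = ∅ := by
      simp [Sn]
    simp [src, thr, pred, hc]
  · have hc := inter_Tn_empty (I := ({Sum.inl ()} : Finset (V m l)))
      (P := Finset.univ.filter (fun j => i ∈ S j)) (by simp [Tn])
    simp [src, thr, pred, hc]

lemma step2 (hl : 1 ≤ l) : step S A (I1 A) = I2 A := by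
  have hl0 : ¬ (l ≤ 0) := by omega
  ext v
  rw [mem_step]
  rcases v with ⟨⟩ | j | j | ⟨j, i⟩ | i
  · simp [thr]
  · by_cases hj : j ∈ A <;>
      simp [thr, pred, hj, src, singleton_inter_nonempty]
  · have hc := inter_sn_empty (l := l) (I := I1 A) j (by simp)
    simp [thr, pred, hc, hl0]
  · simp [thr, pred, Sn, singleton_inter_nonempty]
  · have hc := inter_Tn_empty (l := l) (I := I1 A)
      (P := Finset.univ.filter (fun j => i ∈ S j)) (by simp)
    simp [thr, pred, hc]

lemma step3 (hl : 1 ≤ l) : step S A (I2 A) = I3 A := by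
  have hl0 : ¬ (l ≤ 0) := by omega
  ext v
  rw [mem_step]
  rcases v with ⟨⟩ | j | j | ⟨j, i⟩ | i
  · simp [thr]
  · by_cases hj : j ∈ A <;>
      simp [thr, pred, hj, src, singleton_inter_nonempty]
  · by_cases hj : j ∈ A
    · have hsub : Finset.univ.image (fun i => sn (m := m) (l := l) j i) ∩ I2 A
          = Finset.univ.image (fun i => sn j i) := by
        rw [Finset.inter_eq_left]
        intro x hx
        simp only [Finset.mem_image] at hx
        obtain ⟨i, -, rfl⟩ := hx
        simp [sn, hj]
      have hcard : (Finset.univ.image (fun i => sn (m := m) (l := l) j i) ∩ I2 A).card = l := by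
        rw [hsub, Finset.card_image_of_injective _ (sn_inj j)]
        simp
      simp [thr, pred, hcard, hj]
    · have hc := inter_sn_empty (l := l) (I := I2 A) j (by simp [hj])
      simp [thr, pred, hc, hl0, hj]
  · simp [thr, pred, Sn, singleton_inter_nonempty]
  · have hc := inter_Tn_empty (l := l) (I := I2 A)
      (P := Finset.univ.filter (fun j => i ∈ S j)) (by simp)
    simp [thr, pred, hc]

lemma card_Tn_filter {I : Finset (V m l)} {i : Fin l}
    (h : ∀ j : Fin m, (Sum.inr (Sum.inr (Sum.inl j)) : V m l) ∈ I ↔ j ∈ A) :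
    1 ≤ ((Finset.univ.filter (fun j => i ∈ S j)).image Tn ∩ I).card ↔ ∃ j ∈ A, i ∈ S j := by
  rw [Finset.one_le_card]
  constructor
  · rintro ⟨x, hx⟩
    simp only [Finset.mem_inter, Finset.mem_image, Finset.mem_filter] at hx
    obtain ⟨⟨j, ⟨-, hij⟩, rfl⟩, h2⟩ := hx
    exact ⟨j, (h j).mp h2, hij⟩
  · rintro ⟨j, hj, hij⟩
    exact ⟨Tn j, by simp [Tn, hij, (h j).mpr hj]⟩

lemma step4 (hl : 1 ≤ l) : step S A (I3 A) = FF S A := by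
  ext v
  rw [mem_step]
  rcases v with ⟨⟩ | j | j | ⟨j, i⟩ | i
  · simp [thr]
  · by_cases hj : j ∈ A <;>
      simp [thr, pred, hj, src, singleton_inter_nonempty]
  · by_cases hj : j ∈ A
    · simp [thr, hj]
    · have hc := inter_sn_empty (l := l) (I := I3 A) j (by simp [hj])
      have hl0 : ¬ (l ≤ 0) := by omega
      simp [thr, pred, hc, hl0, hj]
  · simp [thr, pred, Sn, singleton_inter_nonempty]
  · have := card_Tn_filter S A (I := I3 A) (i := i) (fun j => by simp)
    simp only [thr, pred, this, mem_I3_un, mem_FF_un, false_or]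

lemma stepFF (hl : 1 ≤ l) : step S A (FF S A) = FF S A := by
  ext v
  rw [mem_step]
  rcases v with ⟨⟩ | j | j | ⟨j, i⟩ | i
  · simp [thr]
  · by_cases hj : j ∈ A <;>
      simp [thr, pred, hj, src, singleton_inter_nonempty]
  · by_cases hj : j ∈ A
    · simp [thr, hj]
    · have hc := inter_sn_empty (I := FF S A) j (by simp [hj])
      have hl0 : ¬ (l ≤ 0) := by omega
      simp [thr, pred, hc, hl0, hj]
  · simp [thr, pred, Sn, singleton_inter_nonempty]
  · have := card_Tn_filter S A (I := FF S A) (i := i) (fun j => by simp)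
    simp only [thr, pred, this, mem_FF_un, or_self]

lemma final_eq (hl : 1 ≤ l) (hcov : ∀ i : Fin l, ∃ j : Fin m, i ∈ S j) :
    final S A = FF S A := by
  have hm : 1 ≤ m := by
    obtain ⟨j, -⟩ := hcov ⟨0, hl⟩
    exact j.pos
  have e4 : (step S A)^[4] {src} = FF S A := by
    show step S A (step S A (step S A (step S A {src}))) = FF S A
    rw [step1 S A hl, step2 S A hl, step3 S A hl, step4 S A hl]
  have hcard : 4 ≤ Fintype.card (V m l) := by
    have h : Fintype.card (V m l) = 1 + (m + (m + (m * l + l))) := by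
      simp [V]
    rw [h]
    nlinarith
  have hsum := Nat.sub_add_cancel hcard
  calc final S A = (step S A)^[(Fintype.card (V m l) - 4) + 4] {src} := by
        rw [final, hsum]
    _ = (step S A)^[Fintype.card (V m l) - 4] ((step S A)^[4] {src}) := by
        rw [Function.iterate_add_apply]
    _ = FF S A := by rw [e4]; exact Function.iterate_fixed (stepFF S A hl) _


end Aux

/-- Running the Linear-Threshold cascade from seed `{v†}` in the
gadget with added edges `{(v†,Sⱼ) : j ∈ A}` activates exactly the vertices
`Sⱼ, s_{j,1},…,s_{j,l}, Tⱼ` for `j ∈ A`, together with `⋃_{j∈A} Sⱼ ⊆ U`. In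
particular all of `U` is activated iff `{Sⱼ : j ∈ A}` is a set cover of `U`. -/
theorem lt_gadget_activation
    {m l : ℕ} (hl : 1 ≤ l) (S : Fin m → Finset (Fin l))
    (hcov : ∀ i : Fin l, ∃ j : Fin m, i ∈ S j)
    (A : Finset (Fin m)) :
    final S A =
      {src} ∪ A.image Sn ∪ (A ×ˢ (Finset.univ : Finset (Fin l))).image
          (fun p => sn p.1 p.2) ∪ A.image Tn ∪
        (Finset.univ.filter (fun i => ∃ j ∈ A, i ∈ S j)).image un ∧
    ((Finset.univ.image (un (m := m)) ⊆ final S A) ↔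
      ∀ i : Fin l, ∃ j ∈ A, i ∈ S j) := by
  rw [final_eq S A hl hcov]
  constructor
  · rfl
  · constructor
    · intro h i
      have hi : un i ∈ FF S A := h (Finset.mem_image_of_mem un (Finset.mem_univ i))
      simpa [un] using hi
    · intro h x hx
      simp only [Finset.mem_image] at hx
      obtain ⟨i, -, rfl⟩ := hx
      simp [un, h i]

end LTGadget
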